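/- arXiv:1908.04843 — 4 statements merged into one kernel-verified Lean document; each statement's English description precedes it below -/
import Mathlib

section
/- Let S₀, S₁, S₂, … be subsets of ℤ with 0 ∈ S₀ and S_k ≠ ∅ for at least one k ≥ 2. Then gcd of the union of all S_k (k ≥ 0) equals gcd of the set S₁ ∪ ⋃_{k≥2} (S_k + S₀), where S_k + S₀ = {s + r : s ∈ S_k, r ∈ S₀}. -/
/-- gcd (⋃ k, S k) = gcd (S 1 ∪ ⋃_{k ≥ 2} (S k + S 0)), stated via the
universal property of gcd (common divisors coincide), given 0 ∈ S 0 and some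
S k ≠ ∅ with k ≥ 2. -/
theorem stmt5 (S : ℕ → Set ℤ) (h0 : (0 : ℤ) ∈ S 0)
    (hk : ∃ k, 2 ≤ k ∧ (S k).Nonempty) :
    ∀ d : ℤ, (∀ n ∈ ⋃ k, S k, d ∣ n) ↔
      (∀ n ∈ S 1 ∪ ⋃ k, ⋃ (_ : 2 ≤ k), Set.image2 (· + ·) (S k) (S 0), d ∣ n) := by
  intro d
  constructor
  · intro h n hn
    rcases hn with hn | hn
    · exact h n (Set.mem_iUnion.2 ⟨1, hn⟩)
    · simp only [Set.mem_iUnion] at hn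
      obtain ⟨k, hk2, hn⟩ := hn
      obtain ⟨s, hs, r, hr, rfl⟩ := hn
      exact Dvd.dvd.add (h s (Set.mem_iUnion.2 ⟨k, hs⟩)) (h r (Set.mem_iUnion.2 ⟨0, hr⟩))
  · intro h n hn
    obtain ⟨k0, hk2, s, hs⟩ := hk
    have hs' : d ∣ s := by
      have := h (s + 0) (Or.inr (Set.mem_iUnion.2 ⟨k0, Set.mem_iUnion.2
        ⟨hk2, Set.mem_image2.2 ⟨s, hs, 0, h0, rfl⟩⟩⟩))
      simpa using this
    have hS0 : ∀ r ∈ S 0, d ∣ r := by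
      intro r hr
      have := h (s + r) (Or.inr (Set.mem_iUnion.2 ⟨k0, Set.mem_iUnion.2
        ⟨hk2, Set.mem_image2.2 ⟨s, hs, r, hr, rfl⟩⟩⟩))
      exact (dvd_add_right hs').mp this
    rw [Set.mem_iUnion] at hn
    obtain ⟨k, hn⟩ := hn
    match k with
    | 0 => exact hS0 n hn
    | 1 => exact h n (Or.inl hn)
    | (m + 2) =>
      have := h (n + 0) (Or.inr (Set.mem_iUnion.2 ⟨m + 2, Set.mem_iUnion.2
        ⟨by omega, Set.mem_image2.2 ⟨n, hn, 0, h0, rfl⟩⟩⟩))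
      simpa using this
end

section
/- (Cycle lemma / Otter–Dwass identity for sesqui-type trees) Let (ξ_i, ζ_i), i ≥ 1 be i.i.d. copies of an ℕ₀²-valued random vector (ξ, ζ). Let T be the sesqui-type Galton–Watson tree in which only type-1 vertices reproduce, each with offspring (ξ, ζ) (ξ children of type 1, ζ sterile children of type 2), started from a type-1 root. Then for all n ≥ ℓ ≥ 1, P(#T = n, #₁T = ℓ) = (1/ℓ)·P( Σ_{i=1}^ℓ (ξ_i − 1) = −1 and Σ_{i=1}^ℓ (ζ_i + 1) = n ). -/
open Finset
open Fin.NatCast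

namespace Stmt8Aux

variable {ℓ : ℕ} [NeZero ℓ]

/-- Walk increments summed: partial sums of `a (i mod ℓ) - 1`. -/
def G (a : Fin ℓ → ℕ) (k : ℕ) : ℤ :=
  ∑ i ∈ range k, ((a ((i : ℕ) : Fin ℓ) : ℤ) - 1)

lemma G_add (a : Fin ℓ → ℕ) (m k : ℕ) :
    G a (m + k) = G a m + ∑ i ∈ range k, ((a (((m + i : ℕ)) : Fin ℓ) : ℤ) - 1) := by
  induction k with
  | zero => simp
  | succ k ih =>
      have h1 : G a (m + (k + 1)) = G a (m + k) + ((a (((m + k : ℕ)) : Fin ℓ) : ℤ) - 1) := by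
        rw [← Nat.add_assoc]
        exact Finset.sum_range_succ _ _
      rw [h1, ih, Finset.sum_range_succ]
      ring

lemma G_self (a : Fin ℓ → ℕ) (ha : ∑ i, a i = ℓ - 1) : G a ℓ = -1 := by
  have hℓ : 1 ≤ ℓ := Nat.one_le_iff_ne_zero.2 (NeZero.ne ℓ)
  have h1 : G a ℓ = (∑ i : Fin ℓ, (a i : ℤ)) - ℓ := by
    rw [G, Finset.sum_sub_distrib, Finset.sum_const, card_range, nsmul_eq_mul, mul_one]
    congr 1
    rw [← Fin.sum_univ_eq_sum_range (fun k => (a ((k : ℕ) : Fin ℓ) : ℤ)) ℓ]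
    exact Finset.sum_congr rfl fun i _ => by rw [Fin.cast_val_eq_self]
  have h2 : (∑ i : Fin ℓ, (a i : ℤ)) = (ℓ : ℤ) - 1 := by
    have h := congrArg (Nat.cast : ℕ → ℤ) ha
    push_cast at h
    rw [h, Nat.cast_sub hℓ, Nat.cast_one]
  rw [h1, h2]; ring

lemma G_period (a : Fin ℓ → ℕ) (ha : ∑ i, a i = ℓ - 1) (k : ℕ) :
    G a (k + ℓ) = G a k - 1 := by
  have h1 : G a (ℓ + k) = G a ℓ + ∑ i ∈ range k, ((a (((ℓ + i : ℕ)) : Fin ℓ) : ℤ) - 1) :=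
    G_add a ℓ k
  have h2 : ∑ i ∈ range k, ((a (((ℓ + i : ℕ)) : Fin ℓ) : ℤ) - 1) = G a k := by
    apply Finset.sum_congr rfl
    intro i _
    congr 2
    rw [Nat.cast_add, Fin.natCast_self, zero_add]
  rw [add_comm k ℓ, h1, h2, G_self a ha]
  ring

lemma sum_if_lt {M : Type*} [AddCommMonoid M] (f : Fin ℓ → M) {k : ℕ} (hk : k ≤ ℓ) :
    (∑ i : Fin ℓ, if (i : ℕ) < k then f i else 0) = ∑ j ∈ range k, f ((j : ℕ) : Fin ℓ) := by
  calc (∑ i : Fin ℓ, if (i : ℕ) < k then f i else 0)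
      = ∑ i : Fin ℓ, (if ((i : ℕ) : ℕ) < k then f (((i : ℕ) : ℕ) : Fin ℓ) else 0) := by
        apply Finset.sum_congr rfl
        intro i _
        simp only [Fin.cast_val_eq_self]
    _ = ∑ j ∈ range ℓ, (if j < k then f ((j : ℕ) : Fin ℓ) else 0) :=
        Fin.sum_univ_eq_sum_range (fun j : ℕ => if j < k then f ((j : ℕ) : Fin ℓ) else 0) ℓ
    _ = ∑ j ∈ (range ℓ).filter (fun j => j < k), f ((j : ℕ) : Fin ℓ) :=
        (Finset.sum_filter _ _).symm
    _ = ∑ j ∈ range k, f ((j : ℕ) : Fin ℓ) := by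
        congr 1
        ext x
        simp only [Finset.mem_filter, Finset.mem_range]
        omega

lemma cast_add_val (r : Fin ℓ) (j : ℕ) : (((r : ℕ) + j : ℕ) : Fin ℓ) = ((j : ℕ) : Fin ℓ) + r := by
  rw [Nat.cast_add, Fin.cast_val_eq_self, add_comm]

/-- Translation of the first-passage condition for the rotated word into the walk. -/
lemma cond_iff (w : Fin ℓ → ℕ × ℕ) (r : Fin ℓ) :
    (∀ k, 1 ≤ k → k < ℓ → k ≤ ∑ i : Fin ℓ, if (i : ℕ) < k then (w (i + r)).1 else 0)
      ↔ ∀ k, 1 ≤ k → k < ℓ →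
          G (fun i => (w i).1) (r : ℕ) ≤ G (fun i => (w i).1) ((r : ℕ) + k) := by
  set a : Fin ℓ → ℕ := fun i => (w i).1 with ha
  apply forall_congr'
  intro k
  by_cases hk1 : 1 ≤ k
  · by_cases hk2 : k < ℓ
    · simp only [hk1, hk2, true_implies, forall_true_left]
      have hS : ((∑ i : Fin ℓ, if (i : ℕ) < k then a (i + r) else 0 : ℕ) : ℤ) =
          G a ((r : ℕ) + k) - G a (r : ℕ) + k := by
        have e1 : ((∑ i : Fin ℓ, if (i : ℕ) < k then a (i + r) else 0 : ℕ) : ℤ)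
            = ∑ i : Fin ℓ, if (i : ℕ) < k then (a (i + r) : ℤ) else 0 := by
          push_cast
          rfl
        have e2 : (∑ i : Fin ℓ, if (i : ℕ) < k then (a (i + r) : ℤ) else 0)
            = ∑ j ∈ range k, (a (((j : ℕ) : Fin ℓ) + r) : ℤ) :=
          sum_if_lt (fun i => (a (i + r) : ℤ)) hk2.le
        have e3 : (∑ j ∈ range k, (a (((j : ℕ) : Fin ℓ) + r) : ℤ))
            = ∑ j ∈ range k, (a ((((r : ℕ) + j : ℕ)) : Fin ℓ) : ℤ) := by
          apply Finset.sum_congr rfl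
          intro j _
          rw [cast_add_val]
        have e4 := G_add a (r : ℕ) k
        rw [Finset.sum_sub_distrib, Finset.sum_const, card_range, nsmul_eq_mul, mul_one] at e4
        rw [e1, e2, e3]
        omega
      constructor
      · intro h
        have h' : (k : ℤ) ≤ ((∑ i : Fin ℓ, if (i : ℕ) < k then a (i + r) else 0 : ℕ) : ℤ) := by
          exact_mod_cast h
        omega
      · intro h
        have h' : (k : ℤ) ≤ ((∑ i : Fin ℓ, if (i : ℕ) < k then a (i + r) else 0 : ℕ) : ℤ) := by
          omega
        exact_mod_cast h'
    · simp [hk2]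
  · simp [hk1]

lemma cycle_core (a : Fin ℓ → ℕ) (ha : ∑ i, a i = ℓ - 1) :
    ∃! r : Fin ℓ, ∀ k, 1 ≤ k → k < ℓ → G a (r : ℕ) ≤ G a ((r : ℕ) + k) := by
  classical
  have hℓ : 0 < ℓ := Nat.pos_of_ne_zero (NeZero.ne ℓ)
  have hper : ∀ k, G a (k + ℓ) = G a k - 1 := G_period a ha
  have hex : ∃ j, j < ℓ ∧ ∀ i < ℓ, G a j ≤ G a i := by
    obtain ⟨j, hj, hmin⟩ := Finset.exists_min_image (range ℓ) (G a) ⟨0, mem_range.2 hℓ⟩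
    exact ⟨j, mem_range.1 hj, fun i hi => hmin i (mem_range.2 hi)⟩
  set r := Nat.find hex with hr
  obtain ⟨hrℓ, hrmin⟩ := Nat.find_spec hex
  have hstrict : ∀ j < r, G a r < G a j := by
    intro j hj
    have hne := Nat.find_min hex hj
    push_neg at hne
    obtain ⟨i, hi, hlt⟩ := hne (lt_trans hj hrℓ)
    exact lt_of_le_of_lt (hrmin i hi) hlt
  have hgood : ∀ k, 1 ≤ k → k < ℓ → G a r ≤ G a (r + k) := by
    intro k hk1 hk2
    by_cases h : r + k < ℓ
    · exact hrmin _ h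
    · have hj : r + k - ℓ < r := by omega
      have hper' : G a (r + k) = G a (r + k - ℓ) - 1 := by
        have h2 := hper (r + k - ℓ)
        rw [Nat.sub_add_cancel (by omega)] at h2
        exact h2
      have h2 := hstrict _ hj
      omega
  have hcontra : ∀ t t' : ℕ, t < t' → t' < ℓ →
      (∀ k, 1 ≤ k → k < ℓ → G a t ≤ G a (t + k)) →
      (∀ k, 1 ≤ k → k < ℓ → G a t' ≤ G a (t' + k)) → False := by
    intro t t' htt' ht'ℓ hgt hgt'
    have h1 : G a t ≤ G a t' := by
      have h := hgt (t' - t) (by omega) (by omega)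
      have e : t + (t' - t) = t' := by omega
      rwa [e] at h
    have h2 : G a t' ≤ G a (t + ℓ) := by
      have h := hgt' (t + ℓ - t') (by omega) (by omega)
      have e : t' + (t + ℓ - t') = t + ℓ := by omega
      rwa [e] at h
    have h3 := hper t
    omega
  refine ⟨⟨r, hrℓ⟩, hgood, ?_⟩
  intro s hs
  apply Fin.ext
  show (s : ℕ) = r
  by_contra hne
  rcases lt_or_gt_of_ne hne with h | h
  · exact hcontra (s : ℕ) r h hrℓ hs hgood
  · exact hcontra r (s : ℕ) h s.isLt hgood hs

/-- The cycle lemma in the form used by the main theorem. -/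
lemma cycleFin (w : Fin ℓ → ℕ × ℕ) (hw : ∑ i, (w i).1 = ℓ - 1) :
    ∃! r : Fin ℓ, ∀ k, 1 ≤ k → k < ℓ →
      k ≤ ∑ i : Fin ℓ, if (i : ℕ) < k then (w (i + r)).1 else 0 := by
  obtain ⟨r, hr, hu⟩ := cycle_core (fun i => (w i).1) hw
  exact ⟨r, (cond_iff w r).2 hr, fun s hs => hu s ((cond_iff w s).1 hs)⟩

omit [NeZero ℓ] in
lemma finite_aux (A B : ℕ) :
    Finite {w : Fin ℓ → ℕ × ℕ // (∑ i, (w i).1 = A) ∧ (∑ i, (w i).2 = B)} := by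
  apply Finite.of_injective (β := Fin ℓ → Fin (A + 1) × Fin (B + 1))
    (fun w i => (⟨(w.1 i).1, by
        have h : (w.1 i).1 ≤ ∑ j, (w.1 j).1 := Finset.single_le_sum (f := fun j => (w.1 j).1)
          (fun _ _ => Nat.zero_le _) (Finset.mem_univ i)
        have h2 := w.2.1
        omega⟩, ⟨(w.1 i).2, by
        have h : (w.1 i).2 ≤ ∑ j, (w.1 j).2 := Finset.single_le_sum (f := fun j => (w.1 j).2)
          (fun _ _ => Nat.zero_le _) (Finset.mem_univ i)
        have h2 := w.2.2
        omega⟩))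
  intro v w h
  apply Subtype.ext
  funext i
  have h2 := congrFun h i
  simp only [Prod.mk.injEq, Fin.mk.injEq] at h2
  exact Prod.ext h2.1 h2.2

end Stmt8Aux

/-- cycle lemma / Otter–Dwass for sesqui-type trees:
P(#T = n, #₁T = ℓ), written via the first-passage depth-first representation,
equals (1/ℓ)·P(Σ(ξᵢ−1) = −1, Σ(ζᵢ+1) = n). -/
theorem stmt8 (p : ℕ × ℕ → ℝ) (hpos : ∀ v, 0 ≤ p v) (hsum : HasSum p 1)
    (n ℓ : ℕ) (h1 : 1 ≤ ℓ) (hn : ℓ ≤ n) :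
    (∑' w : {w : Fin ℓ → ℕ × ℕ //
        (∀ k, 1 ≤ k → k < ℓ → k ≤ ∑ i : Fin ℓ, if (i : ℕ) < k then (w i).1 else 0) ∧
        (∑ i, (w i).1 = ℓ - 1) ∧ (∑ i, (w i).2 = n - ℓ)}, ∏ i, p (w.1 i))
      = (1 / ℓ : ℝ) *
        ∑' w : {w : Fin ℓ → ℕ × ℕ // (∑ i, (w i).1 = ℓ - 1) ∧ (∑ i, (w i).2 = n - ℓ)},
          ∏ i, p (w.1 i) := by
  classical
  haveI : NeZero ℓ := ⟨by omega⟩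
  haveI hFA : Finite {w : Fin ℓ → ℕ × ℕ // (∑ i, (w i).1 = ℓ - 1) ∧ (∑ i, (w i).2 = n - ℓ)} :=
    Stmt8Aux.finite_aux (ℓ - 1) (n - ℓ)
  haveI hFG : Finite {w : Fin ℓ → ℕ × ℕ //
      (∀ k, 1 ≤ k → k < ℓ → k ≤ ∑ i : Fin ℓ, if (i : ℕ) < k then (w i).1 else 0) ∧
      (∑ i, (w i).1 = ℓ - 1) ∧ (∑ i, (w i).2 = n - ℓ)} :=
    Finite.of_injective
      (fun w => (⟨w.1, w.2.2⟩ :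
        {w : Fin ℓ → ℕ × ℕ // (∑ i, (w i).1 = ℓ - 1) ∧ (∑ i, (w i).2 = n - ℓ)}))
      (by intro u v h
          apply Subtype.ext
          have h2 := congrArg Subtype.val h
          exact h2)
  haveI := Fintype.ofFinite
    {w : Fin ℓ → ℕ × ℕ // (∑ i, (w i).1 = ℓ - 1) ∧ (∑ i, (w i).2 = n - ℓ)}
  haveI := Fintype.ofFinite {w : Fin ℓ → ℕ × ℕ //
      (∀ k, 1 ≤ k → k < ℓ → k ≤ ∑ i : Fin ℓ, if (i : ℕ) < k then (w i).1 else 0) ∧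
      (∑ i, (w i).1 = ℓ - 1) ∧ (∑ i, (w i).2 = n - ℓ)}
  rw [tsum_fintype, tsum_fintype]
  have hrotsum : ∀ (f : Fin ℓ → ℕ) (r : Fin ℓ), (∑ i, f (i + r)) = ∑ i, f i := by
    intro f r
    exact Fintype.sum_equiv (Equiv.addRight r) _ _ (fun i => rfl)
  let Φ : ({w : Fin ℓ → ℕ × ℕ //
        (∀ k, 1 ≤ k → k < ℓ → k ≤ ∑ i : Fin ℓ, if (i : ℕ) < k then (w i).1 else 0) ∧
        (∑ i, (w i).1 = ℓ - 1) ∧ (∑ i, (w i).2 = n - ℓ)} × Fin ℓ) →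
      {w : Fin ℓ → ℕ × ℕ // (∑ i, (w i).1 = ℓ - 1) ∧ (∑ i, (w i).2 = n - ℓ)} := fun x =>
    ⟨fun i => x.1.1 (i + x.2), by
      constructor
      · rw [hrotsum (fun i => (x.1.1 i).1) x.2]; exact x.1.2.2.1
      · rw [hrotsum (fun i => (x.1.1 i).2) x.2]; exact x.1.2.2.2⟩
  have hΦbij : Function.Bijective Φ := by
    constructor
    · rintro ⟨⟨w, hw⟩, r⟩ ⟨⟨w', hw'⟩, r'⟩ h
      have hfun : (fun i => w (i + r)) = fun i => w' (i + r') :=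
        congrArg Subtype.val h
      obtain ⟨s₀, hs₀, hu⟩ := Stmt8Aux.cycleFin w hw.2.1
      have h0 : (0 : Fin ℓ) = s₀ := by
        apply hu
        intro k hk1 hk2
        simpa using hw.1 k hk1 hk2
      have hw'eq : w' = fun i => w (i + (r - r')) := by
        funext i
        have h2 := congrFun hfun (i - r')
        simp only [sub_add_cancel] at h2
        rw [← h2]
        congr 1
        abel
      have hrr' : r - r' = s₀ := by
        apply hu
        intro k hk1 hk2
        have h3 := hw'.1 k hk1 hk2
        rw [hw'eq] at h3
        simpa using h3
      have hr : r = r' := by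
        have h4 : r - r' = 0 := by rw [hrr', ← h0]
        exact sub_eq_zero.1 h4
      subst hr
      have hww' : w = w' := by
        funext i
        have h2 := congrFun hfun (i - r)
        simp only [sub_add_cancel] at h2
        exact h2
      subst hww'
      rfl
    · rintro ⟨v, hv⟩
      obtain ⟨s, hs, _⟩ := Stmt8Aux.cycleFin v hv.1
      refine ⟨(⟨fun i => v (i + s), ?_, ?_, ?_⟩, -s), ?_⟩
      · intro k hk1 hk2
        simpa using hs k hk1 hk2
      · rw [hrotsum (fun i => (v i).1) s]; exact hv.1
      · rw [hrotsum (fun i => (v i).2) s]; exact hv.2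
      · apply Subtype.ext
        funext i
        show v ((i + -s) + s) = v i
        rw [neg_add_cancel_right]
  have key : (∑ v : {w : Fin ℓ → ℕ × ℕ //
        (∑ i, (w i).1 = ℓ - 1) ∧ (∑ i, (w i).2 = n - ℓ)}, ∏ i, p (v.1 i))
      = ℓ * ∑ w : {w : Fin ℓ → ℕ × ℕ //
        (∀ k, 1 ≤ k → k < ℓ → k ≤ ∑ i : Fin ℓ, if (i : ℕ) < k then (w i).1 else 0) ∧
        (∑ i, (w i).1 = ℓ - 1) ∧ (∑ i, (w i).2 = n - ℓ)}, ∏ i, p (w.1 i) := by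
    rw [← Fintype.sum_bijective Φ hΦbij (fun x => ∏ i, p ((Φ x).1 i))
      (fun v => ∏ i, p (v.1 i)) (fun x => rfl)]
    have hterm : ∀ x, (∏ i, p ((Φ x).1 i)) = ∏ i, p (x.1.1 i) := by
      rintro ⟨w, r⟩
      exact Fintype.prod_equiv (Equiv.addRight r) _ _ (fun i => rfl)
    rw [Fintype.sum_congr _ _ hterm]
    rw [Fintype.sum_prod_type]
    simp only [Finset.sum_const, Finset.card_univ, Fintype.card_fin, nsmul_eq_mul]
    rw [← Finset.mul_sum]
  have hne : (ℓ : ℝ) ≠ 0 := Nat.cast_ne_zero.2 (by omega)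
  rw [key, ← mul_assoc, one_div, inv_mul_cancel₀ hne, one_mul]
end

section
/- Let t > 0 and for x > 1 define y = sqrt(x−1)·sqrt(t+x−1)/sqrt(x) and λ = sqrt(x−1)·sqrt(x)·sqrt(t+x−1) / (2(t−2)x − t + 3x² + 1). With Z = t/(t + 2x − 2), the pair (x, y) then satisfies Z = sqrt(1 − 4λ²x/(1 − λy)²), f•(x,y) := t(1−Z)/(2xZ) = 1 − 1/x, and f⋄(x,y) := tλ/((1−λy)Z) = y. -/
/-- the explicit choice of y and λ in terms of x > 1 and t > 0 solves the
admissibility equations f•(x,y) = 1 − 1/x, f⋄(x,y) = y with Z = t/(t+2x−2). -/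
theorem stmt13 (t x y l Z : ℝ) (ht : 0 < t) (hx : 1 < x)
    (hy : y = Real.sqrt (x - 1) * Real.sqrt (t + x - 1) / Real.sqrt x)
    (hl : l = Real.sqrt (x - 1) * Real.sqrt x * Real.sqrt (t + x - 1) /
      (2 * (t - 2) * x - t + 3 * x ^ 2 + 1))
    (hZ : Z = t / (t + 2 * x - 2)) :
    Z = Real.sqrt (1 - 4 * l ^ 2 * x / (1 - l * y) ^ 2) ∧
    t * (1 - Z) / (2 * x * Z) = 1 - 1 / x ∧
    t * l / ((1 - l * y) * Z) = y := by
  have hx0 : (0:ℝ) < x := by linarith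
  have hx1 : (0:ℝ) ≤ x - 1 := by linarith
  have htx : (0:ℝ) ≤ t + x - 1 := by linarith
  set a := Real.sqrt (x - 1) with hadef
  set b := Real.sqrt x with hbdef
  set c := Real.sqrt (t + x - 1) with hcdef
  have ha2 : a ^ 2 = x - 1 := Real.sq_sqrt hx1
  have hb2 : b ^ 2 = x := Real.sq_sqrt hx0.le
  have hc2 : c ^ 2 = t + x - 1 := Real.sq_sqrt htx
  have hb0 : 0 < b := Real.sqrt_pos.mpr hx0
  have hD : 0 < 2 * (t - 2) * x - t + 3 * x ^ 2 + 1 := by nlinarith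
  have hs : 0 < t + 2 * x - 2 := by linarith
  have hDne : 2 * (t - 2) * x - t + x ^ 2 * 3 + 1 ≠ 0 := by nlinarith
  have hZ0 : 0 < Z := by rw [hZ]; positivity
  have hac : a ^ 2 * c ^ 2 = (x - 1) * (t + x - 1) := by rw [ha2, hc2]
  have habc : a ^ 2 * b ^ 2 * c ^ 2 = (x - 1) * x * (t + x - 1) := by rw [ha2, hb2, hc2]
  have hly : 1 - l * y = x * (t + 2 * x - 2) / (2 * (t - 2) * x - t + 3 * x ^ 2 + 1) := by
    rw [hl, hy]
    field_simp
    linear_combination (-1) * hac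
  have hly0 : 0 < 1 - l * y := by rw [hly]; positivity
  refine ⟨?_, ?_, ?_⟩
  · have key : 1 - 4 * l ^ 2 * x / (1 - l * y) ^ 2 = Z ^ 2 := by
      rw [hly, hl, hZ]
      field_simp
      linear_combination (-4) * habc
    rw [key, Real.sqrt_sq hZ0.le]
  · rw [hZ]
    field_simp
    ring
  · rw [hly, hl, hy, hZ]
    field_simp
    linear_combination (a * c) * hb2
end

section
/- For the Bouttier–Di Francesco–Guitter generating functions, the binomial sums simplify: Σ_{k,k'≥0} C(2k+k'+1, k+1)·C(k+k', k)·q_{2+2k+k'}·x^k·y^{k'} with q_n = t·λ^n equals t(1−Z)/(2xZ), and Σ_{k,k'≥0} C(2k+k', k)·C(k+k', k)·q_{1+2k+k'}·x^k·y^{k'} equals tλ/((1−λy)Z), where Z = sqrt(1 − 4λ²x/(1−λy)²), valid for x, y, λ > 0 with λy < 1 and 4λ²x < (1−λy)². -/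
open Finset Polynomial

lemma desc_smeval_succ (r : ℚ) (n : ℕ) :
    (descPochhammer ℤ (n+1)).smeval r = (descPochhammer ℤ n).smeval r * (r - n) := by
  rw [descPochhammer_succ_right, Polynomial.smeval_mul]
  congr 1
  rw [Polynomial.smeval_sub, Polynomial.smeval_X, Polynomial.smeval_natCast]
  simp

lemma desc_smeval_zero (r : ℚ) : (descPochhammer ℤ 0).smeval r = 1 := by
  simp [descPochhammer_zero, Polynomial.smeval_one]

lemma rchoose_eq (r : ℚ) (n : ℕ) :
    Ring.choose r n = (descPochhammer ℤ n).smeval r / n.factorial := by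
  rw [Ring.descPochhammer_eq_factorial_smul_choose, nsmul_eq_mul]
  field_simp [Nat.factorial_ne_zero]

lemma desc_neg_half (n : ℕ) :
    (descPochhammer ℤ n).smeval (-(1/2) : ℚ) = (-(1/4))^n * (2*n).factorial / n.factorial := by
  induction n with
  | zero => simp [desc_smeval_zero]
  | succ n ih =>
      rw [desc_smeval_succ, ih]
      have h2 : ((2*(n+1)).factorial : ℚ) = (2*n+2) * ((2*n+1) * (2*n).factorial) := by
        have : 2*(n+1) = (2*n+1) + 1 := by ring
        rw [this, Nat.factorial_succ]
        push_cast [Nat.factorial_succ]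
        ring
      have h3 : ((n+1).factorial : ℚ) = (n+1) * n.factorial := by
        rw [Nat.factorial_succ]; push_cast; ring
      rw [h2, h3]
      have hn : (n.factorial : ℚ) ≠ 0 := by exact_mod_cast Nat.factorial_ne_zero n
      field_simp
      ring

lemma desc_neg_one (n : ℕ) :
    (descPochhammer ℤ n).smeval (-1 : ℚ) = (-1)^n * n.factorial := by
  induction n with
  | zero => simp [desc_smeval_zero]
  | succ n ih =>
      rw [desc_smeval_succ, ih, Nat.factorial_succ]
      push_cast
      ring

lemma rchoose_neg_half (n : ℕ) :
    Ring.choose (-(1/2) : ℚ) n = (-(1/4))^n * ((2*n).choose n) := by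
  rw [rchoose_eq, desc_neg_half]
  have h := Nat.choose_mul_factorial_mul_factorial (show n ≤ 2*n by omega)
  have h2 : 2*n - n = n := by omega
  rw [h2] at h
  have hn : (n.factorial : ℚ) ≠ 0 := by exact_mod_cast Nat.factorial_ne_zero n
  have : ((2*n).factorial : ℚ) = ((2*n).choose n) * n.factorial * n.factorial := by
    exact_mod_cast congrArg (Nat.cast (R := ℚ)) h.symm
  rw [this]
  field_simp

lemma rchoose_neg_one (n : ℕ) : Ring.choose (-1 : ℚ) n = (-1)^n := by
  rw [rchoose_eq, desc_neg_one]
  have hn : (n.factorial : ℚ) ≠ 0 := by exact_mod_cast Nat.factorial_ne_zero n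
  field_simp

lemma conv_central (n : ℕ) :
    ∑ ij ∈ antidiagonal n, (((2*ij.1).choose ij.1 : ℚ) * ((2*ij.2).choose ij.2)) = 4^n := by
  have h := Ring.add_choose_eq (R := ℚ) (r := -(1/2)) (s := -(1/2)) n (Commute.all _ _)
  have hl : (-(1/2) : ℚ) + -(1/2) = -1 := by norm_num
  rw [hl, rchoose_neg_one] at h
  have h2 : ∑ ij ∈ antidiagonal n, Ring.choose (-(1/2) : ℚ) ij.1 * Ring.choose (-(1/2) : ℚ) ij.2
      = (-(1/4))^n * ∑ ij ∈ antidiagonal n, (((2*ij.1).choose ij.1 : ℚ) * ((2*ij.2).choose ij.2)) := by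
    rw [Finset.mul_sum]
    refine Finset.sum_congr rfl fun ij hij => ?_
    rw [rchoose_neg_half, rchoose_neg_half]
    have : ij.1 + ij.2 = n := by simpa using (Finset.HasAntidiagonal.mem_antidiagonal.mp hij)
    rw [← this, pow_add]
    ring
  rw [h2] at h
  have h4 : ((-(1/4) : ℚ))^n ≠ 0 := by positivity
  have h5 : (-(1/4):ℚ)^n * 4^n = (-1)^n := by rw [← mul_pow]; norm_num
  rw [← h5] at h
  exact (mul_left_cancel₀ h4 h).symm



lemma central_le (n : ℕ) : (2*n).choose n ≤ 4^n := by
  calc (2*n).choose n ≤ (2*n+1).choose n := Nat.choose_le_choose n (by omega)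
  _ ≤ 4^n := Nat.choose_middle_le_pow n

lemma summable_norm_central {u : ℝ} (hu0 : 0 ≤ u) (hu : 4*u < 1) :
    Summable (fun k : ℕ => ‖((2*k).choose k : ℝ) * u ^ k‖) := by
  have hgeo : Summable (fun k : ℕ => (4*u)^k) := summable_geometric_of_lt_one (by positivity) hu
  refine Summable.of_nonneg_of_le (fun k => norm_nonneg _) (fun k => ?_) hgeo
  rw [Real.norm_eq_abs, abs_of_nonneg (by positivity), mul_pow]
  apply mul_le_mul_of_nonneg_right _ (by positivity)
  exact_mod_cast central_le k

lemma hasSum_central {u : ℝ} (hu0 : 0 ≤ u) (hu : 4*u < 1) :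
    HasSum (fun k : ℕ => ((2*k).choose k : ℝ) * u ^ k) (1 / Real.sqrt (1 - 4*u)) := by
  have hs := (summable_norm_central hu0 hu).of_norm
  set S := ∑' k : ℕ, ((2*k).choose k : ℝ) * u ^ k with hS
  have hsq : S * S = 1 / (1 - 4*u) := by
    rw [hS, tsum_mul_tsum_eq_tsum_sum_antidiagonal_of_summable_norm
      (summable_norm_central hu0 hu) (summable_norm_central hu0 hu)]
    have : ∀ n : ℕ, ∑ ij ∈ antidiagonal n, (((2*ij.1).choose ij.1 : ℝ) * u^ij.1) *
        (((2*ij.2).choose ij.2 : ℝ) * u^ij.2) = (4*u)^n := by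
      intro n
      have key : ∑ ij ∈ antidiagonal n, (((2*ij.1).choose ij.1 : ℝ) * ((2*ij.2).choose ij.2)) = 4^n := by
        exact_mod_cast congrArg (Rat.cast (K := ℝ)) (conv_central n)
      calc ∑ ij ∈ antidiagonal n, (((2*ij.1).choose ij.1 : ℝ) * u^ij.1) * (((2*ij.2).choose ij.2 : ℝ) * u^ij.2)
          = ∑ ij ∈ antidiagonal n, (((2*ij.1).choose ij.1 : ℝ) * ((2*ij.2).choose ij.2)) * u^n := by
            refine Finset.sum_congr rfl fun ij hij => ?_
            have h : ij.1 + ij.2 = n := Finset.HasAntidiagonal.mem_antidiagonal.mp hij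
            rw [← h, pow_add]; ring
        _ = (4*u)^n := by rw [← Finset.sum_mul, key, mul_pow]
    rw [tsum_congr this, tsum_geometric_of_lt_one (by positivity) hu, one_div]
  have hSpos : 0 < S := by
    have h0 : (1:ℝ) ≤ S := by
      have := Summable.le_tsum hs 0 (fun k _ => by positivity)
      simpa using this
    linarith
  have h1 : (0:ℝ) < 1 - 4*u := by linarith
  have hSval : S = 1 / Real.sqrt (1 - 4*u) := by
    have : Real.sqrt (S * S) = Real.sqrt (1 / (1 - 4*u)) := by rw [hsq]
    rw [Real.sqrt_mul_self hSpos.le, one_div, Real.sqrt_inv] at this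
    rw [this, one_div]
  rw [← hSval]
  exact hs.hasSum


lemma key1 (k k' : ℕ) :
    ((2 * k + k' + 1).choose (k + 1) : ℝ) * ((k + k').choose k : ℝ)
      = ((2*k+1).choose k : ℝ) * ((k' + (2*k+1)).choose (2*k+1) : ℝ) := by
  rw [Nat.cast_choose ℝ (show k+1 ≤ 2*k+k'+1 by omega),
      Nat.cast_choose ℝ (show k ≤ k+k' by omega),
      Nat.cast_choose ℝ (show k ≤ 2*k+1 by omega),
      Nat.cast_choose ℝ (show 2*k+1 ≤ k' + (2*k+1) by omega),
      show 2*k+k'+1 - (k+1) = k+k' by omega, show k+k'-k = k' by omega,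
      show 2*k+1-k = k+1 by omega, show k'+(2*k+1) - (2*k+1) = k' by omega,
      show k' + (2*k+1) = 2*k+k'+1 by omega]
  have h1 : ((2*k+k'+1).factorial : ℝ) ≠ 0 := by exact_mod_cast Nat.factorial_ne_zero _
  have h2 : ((k+k').factorial : ℝ) ≠ 0 := by exact_mod_cast Nat.factorial_ne_zero _
  have h3 : ((2*k+1).factorial : ℝ) ≠ 0 := by exact_mod_cast Nat.factorial_ne_zero _
  have h4 : (k.factorial : ℝ) ≠ 0 := by exact_mod_cast Nat.factorial_ne_zero _
  have h5 : ((k+1).factorial : ℝ) ≠ 0 := by exact_mod_cast Nat.factorial_ne_zero _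
  have h6 : (k'.factorial : ℝ) ≠ 0 := by exact_mod_cast Nat.factorial_ne_zero _
  field_simp

lemma key2 (k k' : ℕ) :
    ((2 * k + k').choose k : ℝ) * ((k + k').choose k : ℝ)
      = ((2*k).choose k : ℝ) * ((k' + 2*k).choose (2*k) : ℝ) := by
  rw [Nat.cast_choose ℝ (show k ≤ 2*k+k' by omega),
      Nat.cast_choose ℝ (show k ≤ k+k' by omega),
      Nat.cast_choose ℝ (show k ≤ 2*k by omega),
      Nat.cast_choose ℝ (show 2*k ≤ k' + 2*k by omega),
      show 2*k+k' - k = k+k' by omega, show k+k'-k = k' by omega,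
      show 2*k-k = k by omega, show k'+2*k - 2*k = k' by omega,
      show k' + 2*k = 2*k+k' by omega]
  have h1 : ((2*k+k').factorial : ℝ) ≠ 0 := by exact_mod_cast Nat.factorial_ne_zero _
  have h2 : ((k+k').factorial : ℝ) ≠ 0 := by exact_mod_cast Nat.factorial_ne_zero _
  have h3 : ((2*k).factorial : ℝ) ≠ 0 := by exact_mod_cast Nat.factorial_ne_zero _
  have h4 : (k.factorial : ℝ) ≠ 0 := by exact_mod_cast Nat.factorial_ne_zero _
  have h6 : (k'.factorial : ℝ) ≠ 0 := by exact_mod_cast Nat.factorial_ne_zero _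
  field_simp

lemma choose_double_succ (k : ℕ) : (2*(k+1)).choose (k+1) = 2 * ((2*k+1).choose k) := by
  have h1 : (2*(k+1)).choose (k+1) = (2*k+1).choose k + (2*k+1).choose (k+1) := by
    rw [show 2*(k+1) = (2*k+1)+1 by ring]
    exact Nat.choose_succ_succ' (2*k+1) k
  have h2 : (2*k+1).choose (k+1) = (2*k+1).choose k := by
    have := Nat.choose_symm (show k ≤ 2*k+1 by omega)
    rwa [show 2*k+1-k = k+1 by omega] at this
  omega



/-- closed forms of the Bouttier–Di Francesco–Guitter generating functions
for the weights q_n = t·λ^n. -/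
theorem stmt17 (t x y l : ℝ) (ht : 0 < t) (hx : 0 < x) (hy : 0 < y) (hl : 0 < l)
    (hly : l * y < 1) (harg : 4 * l ^ 2 * x < (1 - l * y) ^ 2)
    (Z : ℝ) (hZ : Z = Real.sqrt (1 - 4 * l ^ 2 * x / (1 - l * y) ^ 2)) :
    (∑' kk : ℕ × ℕ, ((2 * kk.1 + kk.2 + 1).choose (kk.1 + 1) : ℝ) *
        ((kk.1 + kk.2).choose kk.1 : ℝ) * (t * l ^ (2 + 2 * kk.1 + kk.2)) *
        x ^ kk.1 * y ^ kk.2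
      = t * (1 - Z) / (2 * x * Z)) ∧
    (∑' kk : ℕ × ℕ, ((2 * kk.1 + kk.2).choose kk.1 : ℝ) *
        ((kk.1 + kk.2).choose kk.1 : ℝ) * (t * l ^ (1 + 2 * kk.1 + kk.2)) *
        x ^ kk.1 * y ^ kk.2
      = t * l / ((1 - l * y) * Z)) := by
  have hw : (0:ℝ) < 1 - l*y := by linarith
  set u : ℝ := l^2*x/(1-l*y)^2 with hu
  have hu0 : 0 < u := by positivity
  have hu4 : 4*u < 1 := by
    have h4 : 4*u = 4*l^2*x/(1-l*y)^2 := by rw [hu]; ring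
    rw [h4, div_lt_one (by positivity)]
    exact harg
  have hZ' : Z = Real.sqrt (1 - 4*u) := by rw [hZ, hu]; ring_nf
  have hZpos : 0 < Z := by
    rw [hZ']; exact Real.sqrt_pos.mpr (by linarith)
  have hvnorm : ‖l*y‖ < 1 := by
    rw [Real.norm_eq_abs, abs_of_pos (by positivity)]; exact hly
  have hcentral : HasSum (fun k : ℕ => ((2*k).choose k : ℝ) * u ^ k) (1/Z) := by
    rw [hZ']; exact hasSum_central hu0.le hu4
  -- shifted central sum
  have hshift : HasSum (fun k : ℕ => ((2*(k+1)).choose (k+1) : ℝ) * u ^ (k+1)) (1/Z - 1) := by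
    refine (hasSum_nat_add_iff (f := fun k : ℕ => ((2*k).choose k : ℝ) * u ^ k) 1).mpr ?_
    simpa using hcentral
  have hhalf : HasSum (fun k : ℕ => ((2*k+1).choose k : ℝ) * u ^ k) ((1/Z - 1)/(2*u)) := by
    have h := hshift.mul_left (2*u)⁻¹
    have heq : (fun k : ℕ => (2*u)⁻¹ * (((2*(k+1)).choose (k+1) : ℝ) * u ^ (k+1)))
        = fun k : ℕ => ((2*k+1).choose k : ℝ) * u ^ k := by
      funext k
      rw [choose_double_succ k, pow_succ]
      push_cast
      field_simp
    rw [heq] at h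
    rwa [div_eq_inv_mul]
  -- the u^k expansion
  have hupow : ∀ k : ℕ, u ^ k = l^(2*k) * x^k / (1-l*y)^(2*k) := by
    intro k
    rw [hu, div_pow, mul_pow, ← pow_mul, ← pow_mul]
  constructor
  · -- first sum
    set f1 : ℕ × ℕ → ℝ := fun kk => ((2 * kk.1 + kk.2 + 1).choose (kk.1 + 1) : ℝ) *
        ((kk.1 + kk.2).choose kk.1 : ℝ) * (t * l ^ (2 + 2 * kk.1 + kk.2)) *
        x ^ kk.1 * y ^ kk.2 with hf1def
    have hf1 : ∀ k k' : ℕ, f1 (k, k') = (t * l^(2*k+2) * x^k * ((2*k+1).choose k : ℝ)) *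
        (((k' + (2*k+1)).choose (2*k+1) : ℝ) * (l*y)^k') := by
      intro k k'
      rw [hf1def]
      simp only
      rw [show 2 + 2*k + k' = (2*k+2)+k' by ring, pow_add, mul_pow]
      rw [show ((2 * k + k' + 1).choose (k + 1) : ℝ) * ((k + k').choose k : ℝ) = _ from key1 k k']
      ring
    set G1 : ℕ → ℝ := fun k => (t * (l^2/(1-l*y)^2)) * (((2*k+1).choose k : ℝ) * u ^ k) with hG1def
    have hrow : ∀ k : ℕ, HasSum (fun k' => f1 (k, k')) (G1 k) := by
      intro k
      have h := (hasSum_choose_mul_geometric_of_norm_lt_one (𝕜 := ℝ) (2*k+1) hvnorm).mul_left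
        (t * l^(2*k+2) * x^k * ((2*k+1).choose k : ℝ))
      have heq : (fun k' : ℕ => (t * l^(2*k+2) * x^k * ((2*k+1).choose k : ℝ)) *
          (((k' + (2*k+1)).choose (2*k+1) : ℝ) * (l*y)^k')) = fun k' => f1 (k, k') := by
        funext k'; rw [hf1 k k']
      rw [heq] at h
      convert h using 1
      · rfl
      rw [hG1def]
      simp only
      rw [hupow k, show 2*k+1+1 = 2*k+2 by ring, show l^(2*k+2) = l^(2*k)*l^2 by ring,
        show (1-l*y)^(2*k+2) = (1-l*y)^(2*k)*(1-l*y)^2 by ring]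
      field_simp
    have houter : HasSum G1 ((t * (l^2/(1-l*y)^2)) * ((1/Z - 1)/(2*u))) := hhalf.mul_left _
    have hpos : 0 ≤ f1 := by
      intro kk
      rw [hf1def]
      simp only
      positivity
    have hsumm : Summable f1 := by
      refine (summable_prod_of_nonneg hpos).mpr ⟨fun k => (hrow k).summable, ?_⟩
      have : (fun k => ∑' k', f1 (k, k')) = G1 := funext fun k => (hrow k).tsum_eq
      rw [this]
      exact houter.summable
    have htot : HasSum G1 (∑' kk, f1 kk) :=
      hsumm.hasSum.prod_fiberwise fun k => hrow k
    have := htot.unique houter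
    rw [this]
    rw [hu]
    field_simp
  · -- second sum
    set f2 : ℕ × ℕ → ℝ := fun kk => ((2 * kk.1 + kk.2).choose kk.1 : ℝ) *
        ((kk.1 + kk.2).choose kk.1 : ℝ) * (t * l ^ (1 + 2 * kk.1 + kk.2)) *
        x ^ kk.1 * y ^ kk.2 with hf2def
    have hf2 : ∀ k k' : ℕ, f2 (k, k') = (t * l^(2*k+1) * x^k * ((2*k).choose k : ℝ)) *
        (((k' + 2*k).choose (2*k) : ℝ) * (l*y)^k') := by
      intro k k'
      rw [hf2def]
      simp only
      rw [show 1 + 2*k + k' = (2*k+1)+k' by ring, pow_add, mul_pow]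
      rw [show ((2 * k + k').choose k : ℝ) * ((k + k').choose k : ℝ) = _ from key2 k k']
      ring
    set G2 : ℕ → ℝ := fun k => (t * (l/(1-l*y))) * (((2*k).choose k : ℝ) * u ^ k) with hG2def
    have hrow : ∀ k : ℕ, HasSum (fun k' => f2 (k, k')) (G2 k) := by
      intro k
      have h := (hasSum_choose_mul_geometric_of_norm_lt_one (𝕜 := ℝ) (2*k) hvnorm).mul_left
        (t * l^(2*k+1) * x^k * ((2*k).choose k : ℝ))
      have heq : (fun k' : ℕ => (t * l^(2*k+1) * x^k * ((2*k).choose k : ℝ)) *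
          (((k' + 2*k).choose (2*k) : ℝ) * (l*y)^k')) = fun k' => f2 (k, k') := by
        funext k'; rw [hf2 k k']
      rw [heq] at h
      convert h using 1
      · rfl
      rw [hG2def]
      simp only
      rw [hupow k, show l^(2*k+1) = l^(2*k)*l by ring,
        show (1-l*y)^(2*k+1) = (1-l*y)^(2*k)*(1-l*y) by ring]
      field_simp
    have houter : HasSum G2 ((t * (l/(1-l*y))) * (1/Z)) := hcentral.mul_left _
    have hpos : 0 ≤ f2 := by
      intro kk
      rw [hf2def]
      simp only
      positivity
    have hsumm : Summable f2 := by
      refine (summable_prod_of_nonneg hpos).mpr ⟨fun k => (hrow k).summable, ?_⟩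
      have : (fun k => ∑' k', f2 (k, k')) = G2 := funext fun k => (hrow k).tsum_eq
      rw [this]
      exact houter.summable
    have htot : HasSum G2 (∑' kk, f2 kk) :=
      hsumm.hasSum.prod_fiberwise fun k => hrow k
    have := htot.unique houter
    rw [this]
    field_simp
end
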